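/- Let K be a field containing a primitive n-th root of unity ζ, and let T be a nonempty finite subset of ZMod n with f_T = ∏_{γ ∈ T} (X − ζ^{γ̃}) ∈ K[X]. Then f_T is a binomial, i.e., there exists c ∈ K with f_T = X^{|T|} − c, if and only if |T| divides n and T is an equal-difference set with common difference n/|T|, i.e., T is a coset of the additive subgroup of ZMod n generated by the image of n/|T|. -/
import Mathlib

open Polynomial

section Aux
variable {K : Type*} [Field K] {n : ℕ} {ζ : K}

lemma aux_pow_val (hζ : IsPrimitiveRoot ζ n) (hn : 0 < n) (a : ℕ) :
    ζ ^ ((a : ZMod n)).val = ζ ^ a := by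
  haveI : NeZero n := ⟨hn.ne'⟩
  rw [ZMod.val_natCast]
  conv_rhs => rw [← Nat.mod_add_div a n]
  rw [pow_add, pow_mul, hζ.pow_eq_one, one_pow, mul_one]

lemma aux_chi_add (hζ : IsPrimitiveRoot ζ n) (hn : 0 < n) (x y : ZMod n) :
    ζ ^ (x + y).val = ζ ^ x.val * ζ ^ y.val := by
  haveI : NeZero n := ⟨hn.ne'⟩
  have h : x + y = ((x.val + y.val : ℕ) : ZMod n) := by
    push_cast [ZMod.natCast_val, ZMod.cast_id]; ring
  rw [h, aux_pow_val hζ hn, pow_add]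

lemma aux_chi_mul_nat (hζ : IsPrimitiveRoot ζ n) (hn : 0 < n) (a : ℕ) (x : ZMod n) :
    ζ ^ (((a : ZMod n)) * x).val = (ζ ^ x.val) ^ a := by
  haveI : NeZero n := ⟨hn.ne'⟩
  have h : ((a : ZMod n)) * x = ((a * x.val : ℕ) : ZMod n) := by
    push_cast [ZMod.natCast_val, ZMod.cast_id]; ring
  rw [h, aux_pow_val hζ hn, pow_mul']

lemma aux_chi_nsmul (hζ : IsPrimitiveRoot ζ n) (hn : 0 < n) (a : ℕ) (x : ZMod n) :
    ζ ^ ((a • x : ZMod n)).val = (ζ ^ x.val) ^ a := by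
  rw [nsmul_eq_mul, aux_chi_mul_nat hζ hn]

lemma aux_chi_inj (hζ : IsPrimitiveRoot ζ n) (hn : 0 < n) {x y : ZMod n}
    (h : ζ ^ x.val = ζ ^ y.val) : x = y := by
  haveI : NeZero n := ⟨hn.ne'⟩
  exact ZMod.val_injective n (hζ.pow_inj (ZMod.val_lt x) (ZMod.val_lt y) h)

end Aux

/-- With `ζ` a primitive `n`-th root of unity in a field `K` and `T` a nonempty
finite subset of `ZMod n` with `f_T = ∏_{γ ∈ T} (X - ζ^γ̃)`, the polynomial `f_T` is a binomial
`X^|T| - c` iff `|T|` divides `n` and `T` is a coset of the additive subgroup generated by the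
image of `n / |T|`. -/
theorem binomial_iff_equal_difference {K : Type*} [Field K] (n : ℕ) (hn : 0 < n)
    (ζ : K) (hζ : IsPrimitiveRoot ζ n) (T : Finset (ZMod n)) (hT : T.Nonempty) :
    (∃ c : K, ∏ γ ∈ T, (X - C (ζ ^ γ.val)) = X ^ T.card - C c) ↔
    (T.card ∣ n ∧ ∃ γ₀ : ZMod n, (T : Set (ZMod n)) =
      (γ₀ + ·) '' ((AddSubgroup.closure {(((n / T.card : ℕ) : ZMod n))} :
        AddSubgroup (ZMod n)) : Set (ZMod n))) := by
  haveI : NeZero n := ⟨hn.ne'⟩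
  set m := T.card with hm
  have hm0 : 0 < m := Finset.card_pos.mpr hT
  constructor
  · rintro ⟨c, hc⟩
    obtain ⟨γ₀, hγ₀⟩ := hT
    -- every element of T gives an m-th root of c
    have hroot : ∀ γ ∈ T, (ζ ^ γ.val) ^ m = c := by
      intro γ hγ
      have h0 : Polynomial.eval (ζ ^ γ.val) (∏ γ' ∈ T, (X - C (ζ ^ γ'.val))) = 0 := by
        rw [Polynomial.eval_prod]
        exact Finset.prod_eq_zero hγ (by simp)
      rw [hc] at h0
      simp only [Polynomial.eval_sub, Polynomial.eval_pow, Polynomial.eval_X,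
        Polynomial.eval_C, sub_eq_zero] at h0
      exact h0
    have htor : ∀ γ ∈ T, ((m : ZMod n)) * (γ - γ₀) = 0 := by
      intro γ hγ
      have h1 : ζ ^ (((m : ZMod n)) * γ).val = ζ ^ (((m : ZMod n)) * γ₀).val := by
        rw [aux_chi_mul_nat hζ hn, aux_chi_mul_nat hζ hn, hroot γ hγ, hroot γ₀ hγ₀]
      have := aux_chi_inj hζ hn h1
      rw [mul_sub, this, sub_self]
    -- the m-torsion finset
    classical
    set Sf : Finset (ZMod n) := Finset.univ.filter (fun x => ((m : ZMod n)) * x = 0) with hSf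
    have hTsub : T.image (· - γ₀) ⊆ Sf := by
      intro x hx
      obtain ⟨γ, hγ, rfl⟩ := Finset.mem_image.mp hx
      simp only [hSf, Finset.mem_filter, Finset.mem_univ, true_and]
      exact htor γ hγ
    have hSfcard : Sf.card ≤ m := by
      have hmaps : ∀ x ∈ Sf, ζ ^ x.val ∈ (Polynomial.nthRoots m (1 : K)).toFinset := by
        intro x hx
        simp only [hSf, Finset.mem_filter, Finset.mem_univ, true_and] at hx
        rw [Multiset.mem_toFinset, Polynomial.mem_nthRoots hm0]
        rw [← aux_chi_mul_nat hζ hn, hx, ZMod.val_zero, pow_zero]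
      calc Sf.card ≤ (Polynomial.nthRoots m (1 : K)).toFinset.card :=
            Finset.card_le_card_of_injOn _ hmaps
              (fun x _ y _ h => aux_chi_inj hζ hn h)
        _ ≤ (Polynomial.nthRoots m (1 : K)).card := Multiset.toFinset_card_le _
        _ ≤ m := Polynomial.card_nthRoots m 1
    have himgcard : (T.image (· - γ₀)).card = m :=
      (Finset.card_image_of_injective T sub_left_injective).trans hm.symm
    have himg : T.image (· - γ₀) = Sf :=
      Finset.eq_of_subset_of_card_le hTsub (by rw [himgcard]; exact hSfcard)
    have hSfcard' : Sf.card = m := by rw [← himg, himgcard]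
    -- the torsion subgroup
    set S' : AddSubgroup (ZMod n) :=
      { carrier := {x | ((m : ZMod n)) * x = 0}
        add_mem' := by intro a b ha hb; simp only [Set.mem_setOf_eq] at *
                       rw [mul_add, ha, hb, add_zero]
        zero_mem' := by simp
        neg_mem' := by intro a ha; simp only [Set.mem_setOf_eq] at *
                       rw [mul_neg, ha, neg_zero] } with hS'
    have hS'carrier : (S' : Set (ZMod n)) = ↑Sf := by
      ext x; simp [hS', hSf]
    have hcardS' : Nat.card S' = m := by
      have h1 : Nat.card S' = ((S' : Set (ZMod n))).ncard := Nat.card_coe_set_eq _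
      rw [h1, hS'carrier, Set.ncard_coe_finset, hSfcard']
    have hmn : m ∣ n := by
      have := AddSubgroup.card_addSubgroup_dvd_card S'
      rwa [hcardS', Nat.card_zmod] at this
    refine ⟨hmn, γ₀, ?_⟩
    -- identify S' with the closure
    set D : ZMod n := ((n / m : ℕ) : ZMod n) with hD
    have hDmem : D ∈ S' := by
      show ((m : ZMod n)) * D = 0
      rw [hD, ← Nat.cast_mul, Nat.mul_div_cancel' hmn, ZMod.natCast_self]
    have hle : AddSubgroup.closure {D} ≤ S' :=
      (AddSubgroup.closure_le S').mpr (Set.singleton_subset_iff.mpr hDmem)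
    have hcardcl : Nat.card (AddSubgroup.closure {D}) = m := by
      rw [← AddSubgroup.zmultiples_eq_closure, Nat.card_zmultiples, hD,
        ZMod.addOrderOf_coe _ hn.ne',
        Nat.gcd_eq_right (Nat.div_dvd_of_dvd hmn), Nat.div_div_self hmn hn.ne']
    have hncl : ((AddSubgroup.closure {D} : AddSubgroup (ZMod n)) : Set (ZMod n)).ncard = m := by
      have h1 : Nat.card (AddSubgroup.closure {D} : AddSubgroup (ZMod n))
          = ((AddSubgroup.closure {D} : AddSubgroup (ZMod n)) : Set (ZMod n)).ncard :=
        Nat.card_coe_set_eq _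
      rw [← h1, hcardcl]
    have hnS' : (S' : Set (ZMod n)).ncard = m := by
      have h1 : Nat.card S' = ((S' : Set (ZMod n))).ncard := Nat.card_coe_set_eq _
      rw [← h1, hcardS']
    have hseteq : ((AddSubgroup.closure {D} : AddSubgroup (ZMod n)) : Set (ZMod n))
        = (S' : Set (ZMod n)) := by
      apply Set.eq_of_subset_of_ncard_le hle
      · rw [hncl, hnS']
    ext x
    simp only [Finset.mem_coe, Set.mem_image, SetLike.mem_coe]
    constructor
    · intro hx
      refine ⟨x - γ₀, ?_, by ring⟩
      have : x - γ₀ ∈ Sf := hTsub (Finset.mem_image_of_mem _ hx)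
      rw [← SetLike.mem_coe, hseteq, hS'carrier]
      exact_mod_cast this
    · rintro ⟨s, hs, rfl⟩
      have : s ∈ Sf := by
        rw [← SetLike.mem_coe, hseteq, hS'carrier] at hs
        exact_mod_cast hs
      rw [← himg] at this
      obtain ⟨γ, hγ, hγeq⟩ := Finset.mem_image.mp this
      have : γ₀ + s = γ := by rw [← hγeq]; ring
      rwa [this]
  · rintro ⟨hmn, γ₀, hTeq⟩
    set D : ZMod n := ((n / m : ℕ) : ZMod n) with hD
    set α : K := ζ ^ γ₀.val with hα
    set η : K := ζ ^ (n / m) with hη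
    have hηprim : IsPrimitiveRoot η m :=
      IsPrimitiveRoot.pow hn hζ (Nat.div_mul_cancel hmn).symm
    refine ⟨α ^ m, ?_⟩
    rw [X_pow_sub_C_eq_prod hηprim hm0 rfl]
    -- order of D is m
    have hordD : addOrderOf D = m := by
      rw [hD, ZMod.addOrderOf_coe _ hn.ne',
        Nat.gcd_eq_right (Nat.div_dvd_of_dvd hmn), Nat.div_div_self hmn hn.ne']
    have hmemT : ∀ i : ℕ, γ₀ + i • D ∈ T := by
      intro i
      have : γ₀ + i • D ∈ (T : Set (ZMod n)) := by
        rw [hTeq]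
        exact ⟨i • D, AddSubgroup.nsmul_mem _ (AddSubgroup.mem_closure_singleton_self D) i, rfl⟩
      exact_mod_cast this
    have hval : ∀ i : ℕ, ζ ^ (γ₀ + i • D).val = η ^ i * α := by
      intro i
      rw [aux_chi_add hζ hn, aux_chi_nsmul hζ hn, aux_pow_val hζ hn, mul_comm]
    refine (Finset.prod_bij (fun i _ => γ₀ + i • D) (fun i _ => hmemT i)
      ?_ ?_ ?_).symm
    · -- injective
      intro i hi j hj hij
      simp only [Finset.mem_range] at hi hj
      have h2 : i • D = j • D := add_left_cancel hij
      have h3 : i ≡ j [MOD addOrderOf D] := nsmul_eq_nsmul_iff_modEq.mp h2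
      rw [hordD] at h3
      simpa [Nat.ModEq, Nat.mod_eq_of_lt hi, Nat.mod_eq_of_lt hj] using h3
    · -- surjective
      intro γ hγ
      have hmem : γ ∈ (T : Set (ZMod n)) := hγ
      rw [hTeq] at hmem
      obtain ⟨s, hs, rfl⟩ := hmem
      rw [SetLike.mem_coe, ← AddSubgroup.zmultiples_eq_closure,
        ← mem_multiples_iff_mem_zmultiples] at hs
      obtain ⟨k, hk⟩ := (AddSubmonoid.mem_multiples_iff _ _).mp hs
      refine ⟨k % m, Finset.mem_range.mpr (Nat.mod_lt _ hm0), ?_⟩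
      have h5 : (k % m) • D = s := by
        rw [← hk]
        conv_rhs => rw [← mod_addOrderOf_nsmul]
        rw [hordD]
      show γ₀ + (k % m) • D = γ₀ + s
      rw [h5]
    · intro i hi
      rw [hval i]
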